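/- Let d ≥ 1, let η : ℝ^d → ℝ be continuous, suppose that S := {x ∈ ℝ^d : η(x) = 1/2} is non-empty, that for some ε > 0 the function η is twice continuously differentiable on S + B_ε(0), that ∇η(x₀) ≠ 0 for every x₀ ∈ S, and that ε ≤ inf_{x₀ ∈ S} ‖∇η(x₀)‖ / sup_{z ∈ B_{2ε}(x₀) ∩ (S + B_ε(0))} ‖Hess η(z)‖_op. Then the map g : S × (−ε, ε) → ℝ^d defined by g(x₀, t) := x₀ + t·∇η(x₀)/‖∇η(x₀)‖ is injective, and its image is exactly S + B_ε(0). -/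

import Mathlib

open MeasureTheory Pointwise

noncomputable section

open RealInnerProductSpace in
private lemma taylor_half' {E : Type*} [NormedAddCommGroup E] [NormedSpace ℝ E]
    {f : E → ℝ} {U : Set E} (hU : IsOpen U) (hf : ContDiffOn ℝ 2 f U)
    {x y : E} (hseg : segment ℝ x y ⊆ U) {M : ℝ}
    (hM : ∀ z ∈ segment ℝ x y, ‖fderiv ℝ (fun w => fderiv ℝ f w) z‖ ≤ M) :
    |f y - f x - fderiv ℝ f x (y - x)| ≤ M / 2 * ‖y - x‖ ^ 2 := by
  set v := y - x with hv
  have hdiffOn : DifferentiableOn ℝ f U := hf.differentiableOn (by norm_num)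
  have h1 : ContDiffOn ℝ 1 (fderiv ℝ f) U := hf.fderiv_of_isOpen hU (by norm_num)
  have hdAt : ∀ z ∈ U, DifferentiableAt ℝ f z := fun z hz =>
    (hdiffOn z hz).differentiableAt (hU.mem_nhds hz)
  have hgAt : ∀ z ∈ U, DifferentiableAt ℝ (fderiv ℝ f) z := fun z hz =>
    ((h1.differentiableOn (by norm_num)) z hz).differentiableAt (hU.mem_nhds hz)
  -- Lipschitz bound on fderiv along the segment
  have hlip : ∀ z ∈ segment ℝ x y, ‖fderiv ℝ f z - fderiv ℝ f x‖ ≤ M * ‖z - x‖ := by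
    intro z hz
    exact (convex_segment x y).norm_image_sub_le_of_norm_hasFDerivWithin_le
      (fun w hw => ((hgAt w (hseg hw)).hasFDerivAt).hasFDerivWithinAt) hM
      (left_mem_segment ℝ x y) hz
  have hmem : ∀ u ∈ Set.Icc (0:ℝ) 1, x + u • v ∈ segment ℝ x y := by
    intro u hu
    rw [segment_eq_image']
    exact ⟨u, hu, rfl⟩
  have hderiv : ∀ u ∈ Set.uIcc (0:ℝ) 1,
      HasDerivAt (fun u : ℝ => f (x + u • v)) (fderiv ℝ f (x + u • v) v) u := by
    intro u hu
    rw [Set.uIcc_of_le zero_le_one] at hu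
    have hline : HasDerivAt (fun u : ℝ => x + u • v) v u := by
      simpa using ((hasDerivAt_id u).smul_const v).const_add x
    exact (hdAt _ (hseg (hmem u hu))).hasFDerivAt.comp_hasDerivAt u hline
  have hcont : ContinuousOn (fun u : ℝ => fderiv ℝ f (x + u • v) v) (Set.Icc 0 1) := by
    apply ContinuousOn.clm_apply _ continuousOn_const
    exact (hf.continuousOn_fderiv_of_isOpen hU (by norm_num)).comp
      (by fun_prop) (fun u hu => hseg (hmem u hu))
  have hintg : IntervalIntegrable (fun u : ℝ => fderiv ℝ f (x + u • v) v) volume 0 1 := by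
    apply ContinuousOn.intervalIntegrable
    rwa [Set.uIcc_of_le zero_le_one]
  have hFTC : f y - f x = ∫ u in (0:ℝ)..1, fderiv ℝ f (x + u • v) v := by
    have := intervalIntegral.integral_eq_sub_of_hasDerivAt hderiv hintg
    simpa [hv] using this.symm
  have hsplit : f y - f x - fderiv ℝ f x v
      = ∫ u in (0:ℝ)..1, (fderiv ℝ f (x + u • v) v - fderiv ℝ f x v) := by
    rw [intervalIntegral.integral_sub hintg intervalIntegrable_const,
      intervalIntegral.integral_const, ← hFTC]
    simp
  rw [hsplit]
  have hbound : ∀ u ∈ Set.uIoc (0:ℝ) 1,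
      ‖fderiv ℝ f (x + u • v) v - fderiv ℝ f x v‖ ≤ (M * ‖v‖ ^ 2) * u := by
    intro u hu
    rw [Set.uIoc_of_le zero_le_one] at hu
    have hu01 : u ∈ Set.Icc (0:ℝ) 1 := ⟨le_of_lt hu.1, hu.2⟩
    have h2 := hlip _ (hmem u hu01)
    have : ‖fderiv ℝ f (x + u • v) v - fderiv ℝ f x v‖
        ≤ ‖fderiv ℝ f (x + u • v) - fderiv ℝ f x‖ * ‖v‖ := by
      rw [← ContinuousLinearMap.sub_apply]
      exact ContinuousLinearMap.le_opNorm _ _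
    have h3 : ‖x + u • v - x‖ = u * ‖v‖ := by
      rw [add_sub_cancel_left, norm_smul, Real.norm_eq_abs, abs_of_nonneg hu.1.le]
    calc ‖fderiv ℝ f (x + u • v) v - fderiv ℝ f x v‖
        ≤ ‖fderiv ℝ f (x + u • v) - fderiv ℝ f x‖ * ‖v‖ := this
      _ ≤ (M * (u * ‖v‖)) * ‖v‖ := by
          apply mul_le_mul_of_nonneg_right _ (norm_nonneg _)
          rw [← h3]; exact h2
      _ = (M * ‖v‖ ^ 2) * u := by ring
  have hM0 : 0 ≤ M := by have := hM x (left_mem_segment ℝ x y); exact le_trans (by positivity) this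
  have hmain : ‖∫ u in (0:ℝ)..1, (fderiv ℝ f (x + u • v) v - fderiv ℝ f x v)‖
      ≤ |∫ u in (0:ℝ)..1, (M * ‖v‖ ^ 2) * u| := by
    apply intervalIntegral.norm_integral_le_abs_of_norm_le _
      ((continuous_const.mul continuous_id).intervalIntegrable 0 1)
    · filter_upwards [MeasureTheory.ae_restrict_mem measurableSet_uIoc] with u hu
      exact hbound u hu
  have hval : |∫ u in (0:ℝ)..1, (M * ‖v‖ ^ 2) * u| = M / 2 * ‖v‖ ^ 2 := by
    rw [intervalIntegral.integral_const_mul, integral_id]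
    rw [abs_of_nonneg (by positivity)]
    ring
  rw [hval] at hmain
  calc |(∫ u in (0:ℝ)..1, (fderiv ℝ f (x + u • v) v - fderiv ℝ f x v))|
      = ‖∫ u in (0:ℝ)..1, (fderiv ℝ f (x + u • v) v - fderiv ℝ f x v)‖ := (Real.norm_eq_abs _).symm
    _ ≤ M / 2 * ‖v‖ ^ 2 := hmain

private lemma hasStrict_inner_sub {E : Type*} [NormedAddCommGroup E] [InnerProductSpace ℝ E]
    (c x₀ : E) :
    HasStrictFDerivAt (fun y => (inner ℝ (y - c) (y - c) : ℝ))
      ((fderivInnerCLM ℝ (x₀ - c, x₀ - c)).comp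
        ((ContinuousLinearMap.id ℝ E).prod (ContinuousLinearMap.id ℝ E))) x₀ :=
  HasStrictFDerivAt.inner ℝ ((hasStrictFDerivAt_id x₀).sub_const c)
    ((hasStrictFDerivAt_id x₀).sub_const c)

private lemma stmt1_key (d : ℕ) (η : EuclideanSpace ℝ (Fin d) → ℝ)
    (hcont : Continuous η)
    (S : Set (EuclideanSpace ℝ (Fin d)))
    (hS : S = {x | η x = 1/2}) (hSne : S.Nonempty)
    (ε : ℝ) (hε : 0 < ε)
    (hdiff : ContDiffOn ℝ 2 η (S + Metric.ball (0 : EuclideanSpace ℝ (Fin d)) ε))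
    (hgrad : ∀ x₀ ∈ S, gradient η x₀ ≠ 0)
    (hεsmall : ∀ x₀ ∈ S,
      ∀ z ∈ Metric.ball x₀ (2 * ε) ∩ (S + Metric.ball (0 : EuclideanSpace ℝ (Fin d)) ε),
        ε * ‖fderiv ℝ (fun y => fderiv ℝ η y) z‖ ≤ ‖gradient η x₀‖) :
    ∀ a ∈ S, ∀ b ∈ S, ‖b - a‖ < 2 * ε →
      |(inner ℝ (gradient η a) (b - a) : ℝ)| ≤ ‖gradient η a‖ / (2 * ε) * ‖b - a‖ ^ 2 := by
  have hUopen : IsOpen (S + Metric.ball (0 : EuclideanSpace ℝ (Fin d)) ε) :=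
    Metric.isOpen_ball.add_left
  have hSclosed : IsClosed S := by rw [hS]; exact isClosed_eq hcont continuous_const
  have hmemU : ∀ a ∈ S, ∀ w : EuclideanSpace ℝ (Fin d), ‖w‖ < ε →
      a + w ∈ S + Metric.ball (0 : EuclideanSpace ℝ (Fin d)) ε := fun a ha w hw =>
    Set.add_mem_add ha (mem_ball_zero_iff.mpr hw)
  have hSU : S ⊆ S + Metric.ball (0 : EuclideanSpace ℝ (Fin d)) ε := fun a ha => by
    simpa using hmemU a ha 0 (by simpa using hε)
  have hgradf : ∀ z : EuclideanSpace ℝ (Fin d), ∀ w,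
      fderiv ℝ η z w = inner ℝ (gradient η z) w := fun z w =>
    (InnerProductSpace.toDual_symm_apply (𝕜 := ℝ)).symm
  have hn : ∀ a ∈ S,
      ‖(‖gradient η a‖⁻¹ • gradient η a : EuclideanSpace ℝ (Fin d))‖ = 1 := fun a ha =>
    norm_smul_inv_norm (𝕜 := ℝ) (hgrad a ha)
  intro a ha b hb hab
  have hsegU : segment ℝ a b ⊆
      Metric.ball a (2 * ε) ∩ (S + Metric.ball (0 : EuclideanSpace ℝ (Fin d)) ε) := by
    intro z hz
    rw [segment_eq_image'] at hz
    obtain ⟨θ, hθ, rfl⟩ := hz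
    have hnab : 0 ≤ ‖b - a‖ := norm_nonneg _
    constructor
    · rw [Metric.mem_ball, dist_eq_norm, add_sub_cancel_left, norm_smul,
        Real.norm_eq_abs, abs_of_nonneg hθ.1]
      nlinarith [hθ.1, hθ.2]
    · rcases le_or_gt θ (1/2) with hhalf | hhalf
      · apply hmemU a ha
        rw [norm_smul, Real.norm_eq_abs, abs_of_nonneg hθ.1]
        nlinarith [hθ.1]
      · have hrw : a + θ • (b - a) = b + (θ - 1) • (b - a) := by
          rw [sub_smul, one_smul]; abel
        show a + θ • (b - a) ∈ S + Metric.ball 0 ε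
        rw [hrw]
        apply hmemU b hb
        rw [norm_smul, Real.norm_eq_abs, abs_of_nonpos (by linarith [hθ.2] : θ - 1 ≤ 0)]
        nlinarith [hθ.2]
  have hεg : ∀ z ∈ segment ℝ a b,
      ‖fderiv ℝ (fun w => fderiv ℝ η w) z‖ ≤ ‖gradient η a‖ / ε := by
    intro z hz
    have h2 := hεsmall a ha z (hsegU hz)
    rw [le_div_iff₀ hε]
    linarith
  have htay := taylor_half' hUopen hdiff (fun z hz => (hsegU hz).2) hεg
  have hηa : η a = 1/2 := by rw [hS] at ha; exact ha
  have hηb : η b = 1/2 := by rw [hS] at hb; exact hb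
  rw [hηa, hηb] at htay
  rw [← hgradf]
  calc |fderiv ℝ η a (b - a)| = |1/2 - 1/2 - fderiv ℝ η a (b - a)| := by
        rw [sub_self, zero_sub, abs_neg]
    _ ≤ ‖gradient η a‖ / ε / 2 * ‖b - a‖ ^ 2 := htay
    _ = ‖gradient η a‖ / (2 * ε) * ‖b - a‖ ^ 2 := by ring

private lemma stmt1_inj (d : ℕ) (η : EuclideanSpace ℝ (Fin d) → ℝ)
    (hcont : Continuous η)
    (S : Set (EuclideanSpace ℝ (Fin d)))
    (hS : S = {x | η x = 1/2}) (hSne : S.Nonempty)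
    (ε : ℝ) (hε : 0 < ε)
    (hdiff : ContDiffOn ℝ 2 η (S + Metric.ball (0 : EuclideanSpace ℝ (Fin d)) ε))
    (hgrad : ∀ x₀ ∈ S, gradient η x₀ ≠ 0)
    (hεsmall : ∀ x₀ ∈ S,
      ∀ z ∈ Metric.ball x₀ (2 * ε) ∩ (S + Metric.ball (0 : EuclideanSpace ℝ (Fin d)) ε),
        ε * ‖fderiv ℝ (fun y => fderiv ℝ η y) z‖ ≤ ‖gradient η x₀‖) :
    Set.InjOn (fun p : EuclideanSpace ℝ (Fin d) × ℝ =>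
        p.1 + p.2 • (‖gradient η p.1‖⁻¹ • gradient η p.1)) (S ×ˢ Set.Ioo (-ε) ε) := by
  have hUopen : IsOpen (S + Metric.ball (0 : EuclideanSpace ℝ (Fin d)) ε) :=
    Metric.isOpen_ball.add_left
  have hSclosed : IsClosed S := by rw [hS]; exact isClosed_eq hcont continuous_const
  have hmemU : ∀ a ∈ S, ∀ w : EuclideanSpace ℝ (Fin d), ‖w‖ < ε →
      a + w ∈ S + Metric.ball (0 : EuclideanSpace ℝ (Fin d)) ε := fun a ha w hw =>
    Set.add_mem_add ha (mem_ball_zero_iff.mpr hw)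
  have hSU : S ⊆ S + Metric.ball (0 : EuclideanSpace ℝ (Fin d)) ε := fun a ha => by
    simpa using hmemU a ha 0 (by simpa using hε)
  have hgradf : ∀ z : EuclideanSpace ℝ (Fin d), ∀ w,
      fderiv ℝ η z w = inner ℝ (gradient η z) w := fun z w =>
    (InnerProductSpace.toDual_symm_apply (𝕜 := ℝ)).symm
  have hn : ∀ a ∈ S,
      ‖(‖gradient η a‖⁻¹ • gradient η a : EuclideanSpace ℝ (Fin d))‖ = 1 := fun a ha =>
    norm_smul_inv_norm (𝕜 := ℝ) (hgrad a ha)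
  have key := stmt1_key d η hcont S hS hSne ε hε hdiff hgrad hεsmall
  rintro ⟨x₀, t⟩ ⟨hx₀, ht⟩ ⟨x₁, s⟩ ⟨hx₁, hs⟩ heq
  simp only at heq hx₀ hx₁ ht hs
  have hg₀ : (0:ℝ) < ‖gradient η x₀‖ := norm_pos_iff.mpr (hgrad x₀ hx₀)
  have hg₁ : (0:ℝ) < ‖gradient η x₁‖ := norm_pos_iff.mpr (hgrad x₁ hx₁)
  have hn₀ : ‖(‖gradient η x₀‖⁻¹ • gradient η x₀ : EuclideanSpace ℝ (Fin d))‖ = 1 := hn x₀ hx₀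
  have hn₁ : ‖(‖gradient η x₁‖⁻¹ • gradient η x₁ : EuclideanSpace ℝ (Fin d))‖ = 1 := hn x₁ hx₁
  have htabs : |t| < ε := abs_lt.mpr ⟨ht.1, ht.2⟩
  have hsabs : |s| < ε := abs_lt.mpr ⟨hs.1, hs.2⟩
  have hveq : x₁ - x₀ = t • (‖gradient η x₀‖⁻¹ • gradient η x₀)
      - s • (‖gradient η x₁‖⁻¹ • gradient η x₁) :=
    sub_eq_sub_iff_add_eq_add.mpr (by rw [← heq]; abel)
  have hδlt : ‖x₁ - x₀‖ < 2 * ε := by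
    rw [hveq]
    calc ‖t • (‖gradient η x₀‖⁻¹ • gradient η x₀)
          - s • (‖gradient η x₁‖⁻¹ • gradient η x₁)‖
        ≤ ‖t • (‖gradient η x₀‖⁻¹ • gradient η x₀)‖
          + ‖s • (‖gradient η x₁‖⁻¹ • gradient η x₁)‖ := norm_sub_le _ _
      _ = |t| + |s| := by
          rw [norm_smul t, norm_smul s, hn₀, hn₁, mul_one, mul_one,
            Real.norm_eq_abs, Real.norm_eq_abs]
      _ < 2 * ε := by linarith
  have hx01 : x₀ = x₁ := by
    by_contra hne
    have hδpos : 0 < ‖x₁ - x₀‖ := by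
      rw [norm_pos_iff, sub_ne_zero]
      exact fun h => hne h.symm
    set A : ℝ := inner ℝ (gradient η x₀) (x₁ - x₀) with hA
    set B : ℝ := inner ℝ (gradient η x₁) (x₁ - x₀) with hB
    set δ : ℝ := ‖x₁ - x₀‖ with hδ
    have hAbd : |A| ≤ ‖gradient η x₀‖ / (2 * ε) * δ ^ 2 := key x₀ hx₀ x₁ hx₁ hδlt
    have hBbd : |B| ≤ ‖gradient η x₁‖ / (2 * ε) * δ ^ 2 := by
      have h := key x₁ hx₁ x₀ hx₀ (by rwa [norm_sub_rev])
      have hBrw : (inner ℝ (gradient η x₁) (x₀ - x₁) : ℝ) = -B := by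
        rw [hB, ← inner_neg_right, neg_sub]
      rw [hBrw, abs_neg, norm_sub_rev] at h
      exact h
    have hexp : δ ^ 2 = t * (‖gradient η x₀‖⁻¹ * A) - s * (‖gradient η x₁‖⁻¹ * B) := by
      rw [hδ, ← real_inner_self_eq_norm_sq]
      nth_rewrite 1 [hveq]
      rw [inner_sub_left, real_inner_smul_left, real_inner_smul_left,
        real_inner_smul_left, real_inner_smul_left]
    have h1 : t * (‖gradient η x₀‖⁻¹ * A) ≤ |t| * (‖gradient η x₀‖⁻¹ * |A|) := by
      refine (le_abs_self _).trans (le_of_eq ?_)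
      rw [abs_mul, abs_mul, abs_of_nonneg (inv_nonneg.mpr hg₀.le)]
    have h2 : -(s * (‖gradient η x₁‖⁻¹ * B)) ≤ |s| * (‖gradient η x₁‖⁻¹ * |B|) := by
      refine (neg_le_abs _).trans (le_of_eq ?_)
      rw [abs_mul, abs_mul, abs_of_nonneg (inv_nonneg.mpr hg₁.le)]
    have h3 : ‖gradient η x₀‖⁻¹ * |A| ≤ δ ^ 2 / (2 * ε) := by
      calc ‖gradient η x₀‖⁻¹ * |A|
          ≤ ‖gradient η x₀‖⁻¹ * (‖gradient η x₀‖ / (2 * ε) * δ ^ 2) :=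
            mul_le_mul_of_nonneg_left hAbd (inv_nonneg.mpr hg₀.le)
        _ = δ ^ 2 / (2 * ε) := by field_simp
    have h4 : ‖gradient η x₁‖⁻¹ * |B| ≤ δ ^ 2 / (2 * ε) := by
      calc ‖gradient η x₁‖⁻¹ * |B|
          ≤ ‖gradient η x₁‖⁻¹ * (‖gradient η x₁‖ / (2 * ε) * δ ^ 2) :=
            mul_le_mul_of_nonneg_left hBbd (inv_nonneg.mpr hg₁.le)
        _ = δ ^ 2 / (2 * ε) := by field_simp
    have hP : (0:ℝ) < δ ^ 2 / (2 * ε) := by positivity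
    have h5 : δ ^ 2 ≤ |t| * (δ ^ 2 / (2 * ε)) + |s| * (δ ^ 2 / (2 * ε)) := by
      have h1' := h1.trans (mul_le_mul_of_nonneg_left h3 (abs_nonneg t))
      have h2' := h2.trans (mul_le_mul_of_nonneg_left h4 (abs_nonneg s))
      linarith
    have h6 : |t| * (δ ^ 2 / (2 * ε)) + |s| * (δ ^ 2 / (2 * ε)) < 2 * ε * (δ ^ 2 / (2 * ε)) := by
      nlinarith
    have h7 : 2 * ε * (δ ^ 2 / (2 * ε)) = δ ^ 2 := by field_simp
    linarith
  subst hx01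
  have hts : t = s := by
    have h0 : t • (‖gradient η x₀‖⁻¹ • gradient η x₀)
        = s • (‖gradient η x₀‖⁻¹ • gradient η x₀) := by
      have := heq
      exact add_left_cancel this
    have hne : (‖gradient η x₀‖⁻¹ • gradient η x₀ : EuclideanSpace ℝ (Fin d)) ≠ 0 := by
      intro h
      rw [h, norm_zero] at hn₀
      norm_num at hn₀
    have : (t - s) • (‖gradient η x₀‖⁻¹ • gradient η x₀ : EuclideanSpace ℝ (Fin d)) = 0 := by
      rw [sub_smul, h0, sub_self]
    rcases smul_eq_zero.mp this with h | h
    · exact sub_eq_zero.mp h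
    · exact absurd h hne
  rw [hts]

private lemma stmt1_img (d : ℕ) (η : EuclideanSpace ℝ (Fin d) → ℝ)
    (hcont : Continuous η)
    (S : Set (EuclideanSpace ℝ (Fin d)))
    (hS : S = {x | η x = 1/2}) (hSne : S.Nonempty)
    (ε : ℝ) (hε : 0 < ε)
    (hdiff : ContDiffOn ℝ 2 η (S + Metric.ball (0 : EuclideanSpace ℝ (Fin d)) ε))
    (hgrad : ∀ x₀ ∈ S, gradient η x₀ ≠ 0)
    (hεsmall : ∀ x₀ ∈ S,
      ∀ z ∈ Metric.ball x₀ (2 * ε) ∩ (S + Metric.ball (0 : EuclideanSpace ℝ (Fin d)) ε),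
        ε * ‖fderiv ℝ (fun y => fderiv ℝ η y) z‖ ≤ ‖gradient η x₀‖) :
    (fun p : EuclideanSpace ℝ (Fin d) × ℝ =>
        p.1 + p.2 • (‖gradient η p.1‖⁻¹ • gradient η p.1)) '' (S ×ˢ Set.Ioo (-ε) ε) =
      S + Metric.ball (0 : EuclideanSpace ℝ (Fin d)) ε := by
  have hUopen : IsOpen (S + Metric.ball (0 : EuclideanSpace ℝ (Fin d)) ε) :=
    Metric.isOpen_ball.add_left
  have hSclosed : IsClosed S := by rw [hS]; exact isClosed_eq hcont continuous_const
  have hmemU : ∀ a ∈ S, ∀ w : EuclideanSpace ℝ (Fin d), ‖w‖ < ε →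
      a + w ∈ S + Metric.ball (0 : EuclideanSpace ℝ (Fin d)) ε := fun a ha w hw =>
    Set.add_mem_add ha (mem_ball_zero_iff.mpr hw)
  have hSU : S ⊆ S + Metric.ball (0 : EuclideanSpace ℝ (Fin d)) ε := fun a ha => by
    simpa using hmemU a ha 0 (by simpa using hε)
  have hgradf : ∀ z : EuclideanSpace ℝ (Fin d), ∀ w,
      fderiv ℝ η z w = inner ℝ (gradient η z) w := fun z w =>
    (InnerProductSpace.toDual_symm_apply (𝕜 := ℝ)).symm
  have hn : ∀ a ∈ S,
      ‖(‖gradient η a‖⁻¹ • gradient η a : EuclideanSpace ℝ (Fin d))‖ = 1 := fun a ha =>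
    norm_smul_inv_norm (𝕜 := ℝ) (hgrad a ha)
  apply Set.Subset.antisymm
  · rintro _ ⟨⟨x₀, t⟩, ⟨hx₀, ht⟩, rfl⟩
    simp only
    apply hmemU x₀ hx₀
    rw [norm_smul, hn x₀ hx₀, mul_one, Real.norm_eq_abs]
    exact abs_lt.mpr ⟨ht.1, ht.2⟩
  · rintro x hx
    obtain ⟨sp, hsp, u, hu, rfl⟩ := hx
    obtain ⟨x₀, hx₀S, hdist⟩ := hSclosed.exists_infDist_eq_dist hSne (sp + u)
    have hdlt : ‖sp + u - x₀‖ < ε := by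
      rw [← dist_eq_norm, ← hdist]
      refine lt_of_le_of_lt ?_ (mem_ball_zero_iff.mp hu)
      have h := Metric.infDist_le_dist_of_mem (x := sp + u) hsp
      rwa [dist_eq_norm, add_sub_cancel_left] at h
    have hηx₀ : η x₀ = 1/2 := by rw [hS] at hx₀S; exact hx₀S
    have hg0 : ‖gradient η x₀‖ ≠ 0 := norm_ne_zero_iff.mpr (hgrad x₀ hx₀S)
    -- local minimum of squared distance on S
    have hmin : IsLocalExtrOn
        (fun y : EuclideanSpace ℝ (Fin d) => (inner ℝ (y - (sp + u)) (y - (sp + u)) : ℝ))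
        {y | η y = η x₀} x₀ := by
      left
      apply IsMinOn.localize
      rw [isMinOn_iff]
      intro y hy
      have hyS : y ∈ S := by rw [hS]; rw [hηx₀] at hy; exact hy
      rw [real_inner_self_eq_norm_sq, real_inner_self_eq_norm_sq]
      have h1 : dist (sp + u) x₀ ≤ dist (sp + u) y := by
        rw [← hdist]; exact Metric.infDist_le_dist_of_mem hyS
      rw [dist_eq_norm, dist_eq_norm, norm_sub_rev (sp + u) x₀, norm_sub_rev (sp + u) y] at h1
      exact pow_le_pow_left₀ (norm_nonneg _) h1 2
    have hηd : HasStrictFDerivAt η (fderiv ℝ η x₀) x₀ :=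
      (hdiff.contDiffAt (hUopen.mem_nhds (hSU hx₀S))).hasStrictFDerivAt (by norm_num)
    have hφd : HasStrictFDerivAt
        (fun y : EuclideanSpace ℝ (Fin d) => (inner ℝ (y - (sp + u)) (y - (sp + u)) : ℝ))
        ((fderivInnerCLM ℝ (x₀ - (sp + u), x₀ - (sp + u))).comp
          ((ContinuousLinearMap.id ℝ _).prod (ContinuousLinearMap.id ℝ _))) x₀ :=
      hasStrict_inner_sub (sp + u) x₀
    obtain ⟨a, b, hab, heq0⟩ := hmin.exists_multipliers_of_hasStrictFDerivAt_1d hηd hφd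
    have heval : ∀ w, a * (inner ℝ (gradient η x₀) w : ℝ)
        + b * (2 * (inner ℝ (x₀ - (sp + u)) w : ℝ)) = 0 := by
      intro w
      have h := ContinuousLinearMap.ext_iff.mp heq0 w
      simp only [ContinuousLinearMap.add_apply, ContinuousLinearMap.smul_apply,
        ContinuousLinearMap.comp_apply, ContinuousLinearMap.prod_apply,
        ContinuousLinearMap.coe_id', id_eq, fderivInnerCLM_apply, smul_eq_mul,
        ContinuousLinearMap.zero_apply] at h
      rw [hgradf] at h
      linear_combination h + b * real_inner_comm w (x₀ - (sp + u))
    have hbne : b ≠ 0 := by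
      intro hb0
      have hane : a ≠ 0 := by
        intro ha0
        apply hab
        rw [ha0, hb0]; rfl
      have hz : ∀ w, (inner ℝ (gradient η x₀) w : ℝ) = 0 := by
        intro w
        have h := heval w
        rw [hb0] at h
        have : a * (inner ℝ (gradient η x₀) w : ℝ) = 0 := by linarith
        exact (mul_eq_zero.mp this).resolve_left hane
      exact hgrad x₀ hx₀S (inner_self_eq_zero.mp (hz (gradient η x₀)))
    have h2b : (2 * b) ≠ 0 := mul_ne_zero two_ne_zero hbne
    have hw0 : a • gradient η x₀ + (2 * b) • (x₀ - (sp + u)) = 0 := by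
      set w := a • gradient η x₀ + (2 * b) • (x₀ - (sp + u)) with hw
      have hiw : (inner ℝ w w : ℝ) = 0 := by
        have hexp : (inner ℝ w w : ℝ) = a * (inner ℝ (gradient η x₀) w : ℝ)
            + b * (2 * (inner ℝ (x₀ - (sp + u)) w : ℝ)) := by
          nth_rewrite 1 [hw]
          rw [inner_add_left, real_inner_smul_left, real_inner_smul_left]
          ring
        rw [hexp, heval]
      exact inner_self_eq_zero.mp hiw
    have hxx : sp + u - x₀ = (a / (2 * b)) • gradient η x₀ := by
      have h3 : a • gradient η x₀ = (2 * b) • (sp + u - x₀) := by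
        rw [add_eq_zero_iff_eq_neg] at hw0
        rw [hw0, ← smul_neg, neg_sub]
      calc sp + u - x₀ = (2 * b)⁻¹ • ((2 * b) • (sp + u - x₀)) := by
            rw [smul_smul, inv_mul_cancel₀ h2b, one_smul]
        _ = (2 * b)⁻¹ • (a • gradient η x₀) := by rw [← h3]
        _ = (a / (2 * b)) • gradient η x₀ := by rw [smul_smul, div_eq_inv_mul]
    refine ⟨(x₀, (a / (2 * b)) * ‖gradient η x₀‖), ⟨hx₀S, ?_⟩, ?_⟩
    · have habs : |(a / (2 * b)) * ‖gradient η x₀‖| = ‖sp + u - x₀‖ := by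
        rw [hxx, norm_smul, Real.norm_eq_abs, abs_mul, abs_of_nonneg (norm_nonneg _)]
      have := habs ▸ hdlt
      exact abs_lt.mp this
    · show x₀ + ((a / (2 * b)) * ‖gradient η x₀‖) • (‖gradient η x₀‖⁻¹ • gradient η x₀)
          = sp + u
      rw [smul_smul, mul_assoc, mul_inv_cancel₀ hg0, mul_one, ← hxx]
      abel

theorem stmt1 (d : ℕ) (hd : 1 ≤ d) (η : EuclideanSpace ℝ (Fin d) → ℝ)
    (hcont : Continuous η)
    (S : Set (EuclideanSpace ℝ (Fin d)))
    (hS : S = {x | η x = 1/2}) (hSne : S.Nonempty)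
    (ε : ℝ) (hε : 0 < ε)
    (hdiff : ContDiffOn ℝ 2 η (S + Metric.ball (0 : EuclideanSpace ℝ (Fin d)) ε))
    (hgrad : ∀ x₀ ∈ S, gradient η x₀ ≠ 0)
    (hεsmall : ∀ x₀ ∈ S,
      ∀ z ∈ Metric.ball x₀ (2 * ε) ∩ (S + Metric.ball (0 : EuclideanSpace ℝ (Fin d)) ε),
        ε * ‖fderiv ℝ (fun y => fderiv ℝ η y) z‖ ≤ ‖gradient η x₀‖) :
    Set.InjOn (fun p : EuclideanSpace ℝ (Fin d) × ℝ =>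
        p.1 + p.2 • (‖gradient η p.1‖⁻¹ • gradient η p.1)) (S ×ˢ Set.Ioo (-ε) ε) ∧
    (fun p : EuclideanSpace ℝ (Fin d) × ℝ =>
        p.1 + p.2 • (‖gradient η p.1‖⁻¹ • gradient η p.1)) '' (S ×ˢ Set.Ioo (-ε) ε) =
      S + Metric.ball (0 : EuclideanSpace ℝ (Fin d)) ε := by
  exact ⟨stmt1_inj d η hcont S hS hSne ε hε hdiff hgrad hεsmall,
    stmt1_img d η hcont S hS hSne ε hε hdiff hgrad hεsmall⟩
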